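/- Let (Q₁,N₁) and (Q₂,N₂) be two classical solutions of the Q-system, both existing up to time τ. Then for all s ∈ [0,τ]: d/ds ∫₀¹ (P₀Q₁(s,·)(η) − P₀Q₂(s,·)(η))² dη = 2 ∫₀¹ P₀(Q₁(s,·) − Q₂(s,·))(η) · P₀(K∘Q₁(s,·) − K∘Q₂(s,·))(η) dη. In particular, if K is affine, K(φ) = kφ + b, then ‖P₀Q₁(τ,·) − P₀Q₂(τ,·)‖_{L²(0,1)} = e^{kτ} · ‖P₀Q₁(0,·) − P₀Q₂(0,·)‖_{L²(0,1)}. -/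

import Mathlib

open Real Set MeasureTheory Filter Topology
open scoped ENNReal

noncomputable section

/-- The time interval `[0, T)` in `ℝ`, where `T : ℝ≥0∞` may be `∞`. -/
def Ico0 (T : ℝ≥0∞) : Set ℝ := {τ : ℝ | 0 ≤ τ ∧ ENNReal.ofReal τ < T}

/-- Partial derivative in the time variable (one-sided at `τ = 0`). -/
def pdTau (Q : ℝ → ℝ → ℝ) (τ η : ℝ) : ℝ := derivWithin (fun s => Q s η) (Ici 0) τ

/-- Partial derivative in the spatial variable (one-sided at `η = 0` and `η = 1`). -/
def pdEta (Q : ℝ → ℝ → ℝ) (τ η : ℝ) : ℝ := derivWithin (fun x => Q τ x) (Icc 0 1) η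

/-- Assumption 1.1: `K ∈ C²(ℝ)` with `K'`, `K''` bounded on `ℝ` and `K > 0` on `[0, Φ_F]`. -/
structure KAssump (K : ℝ → ℝ) (ΦF : ℝ) : Prop where
  smooth : ContDiff ℝ 2 K
  bdd1 : ∃ C : ℝ, ∀ x : ℝ, |deriv K x| ≤ C
  bdd2 : ∃ C : ℝ, ∀ x : ℝ, |deriv (deriv K) x| ≤ C
  pos : ∀ φ ∈ Icc (0 : ℝ) ΦF, 0 < K φ

/-- `k_min := K'(0) + ∫₀^{Φ_F} min(K''(φ), 0) dφ`. -/
def kmin (K : ℝ → ℝ) (ΦF : ℝ) : ℝ :=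
  deriv K 0 + ∫ φ in (0 : ℝ)..ΦF, min (deriv (deriv K) φ) 0

/-- `k_max := K'(0) + ∫₀^{Φ_F} max(K''(φ), 0) dφ`. -/
def kmax (K : ℝ → ℝ) (ΦF : ℝ) : ℝ :=
  deriv K 0 + ∫ φ in (0 : ℝ)..ΦF, max (deriv (deriv K) φ) 0

/-- Assumption (A2) on the initial datum. -/
structure A2 (K : ℝ → ℝ) (ΦF : ℝ) (Qinit : ℝ → ℝ) : Prop where
  reg : ContDiffOn ℝ 1 Qinit (Icc 0 1)
  mono : MonotoneOn Qinit (Icc 0 1)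
  init0 : Qinit 0 = 0
  init1 : Qinit 1 = ΦF
  deriv1 : K ΦF < derivWithin Qinit (Icc 0 1) 1
  compat : derivWithin Qinit (Icc 0 1) 1 - derivWithin Qinit (Icc 0 1) 0 = K ΦF - K 0

/-- A classical solution `(Q, N)` of the Q-system on `[0, T)` with initial datum `Qinit`. -/
structure IsQSol (K : ℝ → ℝ) (ΦF : ℝ) (T : ℝ≥0∞) (Qinit : ℝ → ℝ)
    (Q : ℝ → ℝ → ℝ) (N : ℝ → ℝ) : Prop where
  initReg : ContDiffOn ℝ 1 Qinit (Icc 0 1)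
  initMono : MonotoneOn Qinit (Icc 0 1)
  init0 : Qinit 0 = 0
  init1 : Qinit 1 = ΦF
  initDeriv : K ΦF < derivWithin Qinit (Icc 0 1) 1
  reg : ContDiffOn ℝ 1 (Function.uncurry Q) (Ico0 T ×ˢ Icc (0 : ℝ) 1)
  mono : ∀ τ ∈ Ico0 T, MonotoneOn (Q τ) (Icc 0 1)
  Ncont : ContinuousOn N (Ico0 T)
  Npos : ∀ τ ∈ Ico0 T, 0 < N τ
  pde : ∀ τ ∈ Ico0 T, ∀ η ∈ Ioo (0 : ℝ) 1,
    pdTau Q τ η + pdEta Q τ η = 1 / N τ + K (Q τ η)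
  bc : ∀ τ ∈ Ico0 T, Q τ 0 = 0
  Ndef : ∀ τ ∈ Ico0 T, 1 / N τ = pdEta Q τ 1 - K ΦF
  init : ∀ η ∈ Icc (0 : ℝ) 1, Q 0 η = Qinit η
  constraint : ∀ τ ∈ Ico0 T, K ΦF < pdEta Q τ 1

/-- A classical solution `(Q, Ñ)` of the relaxed system on `[0, T)` with initial datum `Qinit`,
where `Ñ` is unconstrained in sign. -/
structure IsRelaxedSol (K : ℝ → ℝ) (ΦF : ℝ) (T : ℝ≥0∞) (Qinit : ℝ → ℝ)
    (Q : ℝ → ℝ → ℝ) (Ntil : ℝ → ℝ) : Prop where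
  initReg : ContDiffOn ℝ 1 Qinit (Icc 0 1)
  init0 : Qinit 0 = 0
  init1 : Qinit 1 = ΦF
  reg : ContDiffOn ℝ 1 (Function.uncurry Q) (Ico0 T ×ˢ Icc (0 : ℝ) 1)
  Ncont : ContinuousOn Ntil (Ico0 T)
  pde : ∀ τ ∈ Ico0 T, ∀ η ∈ Ioo (0 : ℝ) 1,
    pdTau Q τ η + pdEta Q τ η = Ntil τ + K (Q τ η)
  bc : ∀ τ ∈ Ico0 T, Q τ 0 = 0
  Ndef : ∀ τ ∈ Ico0 T, Ntil τ = pdEta Q τ 1 - K ΦF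
  init : ∀ η ∈ Icc (0 : ℝ) 1, Q 0 η = Qinit η

/-- A steady state `(Q*, N*)` of the Q-system. -/
def IsSteadyState (K : ℝ → ℝ) (ΦF : ℝ) (Qs : ℝ → ℝ) (Ns : ℝ) : Prop :=
  ContDiffOn ℝ 1 Qs (Icc 0 1) ∧ 0 < Ns ∧
    (∀ η ∈ Icc (0 : ℝ) 1, derivWithin Qs (Icc 0 1) η = K (Qs η) + 1 / Ns) ∧
    Qs 0 = 0 ∧ Qs 1 = ΦF

/-- `P₀ f := f - ∫₀¹ f`. -/
def P0 (f : ℝ → ℝ) (η : ℝ) : ℝ := f η - ∫ x in (0 : ℝ)..1, f x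

/-- `H_init := Q_init' - K ∘ Q_init` (derivative within `[0,1]`). -/
def Hinit (K : ℝ → ℝ) (Qinit : ℝ → ℝ) (η : ℝ) : ℝ :=
  derivWithin Qinit (Icc 0 1) η - K (Qinit η)

namespace Stmt9Aux

lemma mem_Ico0 {T : ℝ≥0∞} {τ s : ℝ} (hτT : ENNReal.ofReal τ < T) (hs : s ∈ Icc 0 τ) :
    s ∈ Ico0 T :=
  ⟨hs.1, lt_of_le_of_lt (ENNReal.ofReal_le_ofReal hs.2) hτT⟩

lemma Ico0_mem_nhdsWithin {T : ℝ≥0∞} {s : ℝ} (hs : s ∈ Ico0 T) :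
    Ico0 T ∈ 𝓝[Ici 0] s := by
  have hV : IsOpen {t : ℝ | ENNReal.ofReal t < T} :=
    isOpen_lt ENNReal.continuous_ofReal continuous_const
  have heq : Ico0 T = Ici 0 ∩ {t : ℝ | ENNReal.ofReal t < T} := by
    ext t; exact Iff.rfl
  rw [heq]
  exact Filter.inter_mem self_mem_nhdsWithin
    (mem_nhdsWithin_of_mem_nhds (hV.mem_nhds hs.2))

lemma uniqueDiffOn_Ico0 (T : ℝ≥0∞) : UniqueDiffOn ℝ (Ico0 T) := by
  intro s hs
  refine (uniqueDiffOn_Ici 0 s hs.1).mono_nhds ?_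
  exact nhdsWithin_le_iff.2 (Ico0_mem_nhdsWithin hs)

lemma slice_facts {T : ℝ≥0∞} {Q : ℝ → ℝ → ℝ}
    (reg : ContDiffOn ℝ 1 (Function.uncurry Q) (Ico0 T ×ˢ Icc (0 : ℝ) 1))
    {τ : ℝ} (hτT : ENNReal.ofReal τ < T) :
    (∀ s ∈ Icc 0 τ, ∀ η ∈ Icc (0:ℝ) 1,
        HasDerivWithinAt (fun t => Q t η) (pdTau Q s η) (Icc 0 τ) s) ∧
    (∀ s ∈ Icc 0 τ, ∀ η ∈ Icc (0:ℝ) 1,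
        HasDerivWithinAt (fun x => Q s x) (pdEta Q s η) (Icc 0 1) η) ∧
    ContinuousOn (fun p : ℝ × ℝ => pdTau Q p.1 p.2) (Icc 0 τ ×ˢ Icc (0:ℝ) 1) ∧
    ContinuousOn (fun p : ℝ × ℝ => pdEta Q p.1 p.2) (Icc 0 τ ×ˢ Icc (0:ℝ) 1) ∧
    ContinuousOn (fun p : ℝ × ℝ => Q p.1 p.2) (Icc 0 τ ×ˢ Icc (0:ℝ) 1) := by
  set U : Set (ℝ × ℝ) := Ico0 T ×ˢ Icc (0:ℝ) 1 with hU_def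
  have hU : UniqueDiffOn ℝ U := (uniqueDiffOn_Ico0 T).prod (uniqueDiffOn_Icc zero_lt_one)
  have hsub : Icc 0 τ ×ˢ Icc (0:ℝ) 1 ⊆ U := fun p hp => ⟨mem_Ico0 hτT hp.1, hp.2⟩
  have hdiff : DifferentiableOn ℝ (Function.uncurry Q) U := reg.differentiableOn one_ne_zero
  set L := fderivWithin ℝ (Function.uncurry Q) U with hL_def
  have hLcont : ContinuousOn L U := reg.continuousOn_fderivWithin hU le_rfl
  have hτslice : ∀ s ∈ Icc 0 τ, ∀ η ∈ Icc (0:ℝ) 1,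
      HasDerivWithinAt (fun t => Q t η) (L (s, η) ((1:ℝ), (0:ℝ))) (Ico0 T) s := by
    intro s hs η hη
    have hF : HasFDerivWithinAt (Function.uncurry Q) (L (s, η)) U (s, η) :=
      (hdiff _ (hsub ⟨hs, hη⟩)).hasFDerivWithinAt
    have hg : HasDerivWithinAt (fun t : ℝ => ((t, η) : ℝ × ℝ)) ((1:ℝ), (0:ℝ)) (Ico0 T) s :=
      ((hasDerivAt_id s).prodMk (hasDerivAt_const s η)).hasDerivWithinAt
    exact hF.comp_hasDerivWithinAt s hg (fun t ht => Set.mk_mem_prod ht hη)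
  have hτeq : ∀ s ∈ Icc 0 τ, ∀ η ∈ Icc (0:ℝ) 1, pdTau Q s η = L (s, η) ((1:ℝ), (0:ℝ)) := by
    intro s hs η hη
    have h2 := (hτslice s hs η hη).mono_of_mem_nhdsWithin
      (Ico0_mem_nhdsWithin (mem_Ico0 hτT hs))
    exact h2.derivWithin (uniqueDiffOn_Ici 0 s hs.1)
  have hηslice : ∀ s ∈ Icc 0 τ, ∀ η ∈ Icc (0:ℝ) 1,
      HasDerivWithinAt (fun x => Q s x) (L (s, η) ((0:ℝ), (1:ℝ))) (Icc 0 1) η := by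
    intro s hs η hη
    have hF : HasFDerivWithinAt (Function.uncurry Q) (L (s, η)) U (s, η) :=
      (hdiff _ (hsub ⟨hs, hη⟩)).hasFDerivWithinAt
    have hg : HasDerivWithinAt (fun x : ℝ => ((s, x) : ℝ × ℝ)) ((0:ℝ), (1:ℝ)) (Icc 0 1) η :=
      ((hasDerivAt_const η s).prodMk (hasDerivAt_id η)).hasDerivWithinAt
    exact hF.comp_hasDerivWithinAt η hg (fun x hx => ⟨mem_Ico0 hτT hs, hx⟩)
  have hηeq : ∀ s ∈ Icc 0 τ, ∀ η ∈ Icc (0:ℝ) 1, pdEta Q s η = L (s, η) ((0:ℝ), (1:ℝ)) := by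
    intro s hs η hη
    exact (hηslice s hs η hη).derivWithin (uniqueDiffOn_Icc zero_lt_one η hη)
  refine ⟨?_, ?_, ?_, ?_, ?_⟩
  · intro s hs η hη
    rw [hτeq s hs η hη]
    exact (hτslice s hs η hη).mono (fun t ht => mem_Ico0 hτT ht)
  · intro s hs η hη
    rw [hηeq s hs η hη]
    exact hηslice s hs η hη
  · have : ContinuousOn (fun p : ℝ × ℝ => L p ((1:ℝ), (0:ℝ))) (Icc 0 τ ×ˢ Icc (0:ℝ) 1) :=
      (hLcont.mono hsub).clm_apply continuousOn_const
    exact this.congr (fun p hp => hτeq p.1 hp.1 p.2 hp.2)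
  · have : ContinuousOn (fun p : ℝ × ℝ => L p ((0:ℝ), (1:ℝ))) (Icc 0 τ ×ˢ Icc (0:ℝ) 1) :=
      (hLcont.mono hsub).clm_apply continuousOn_const
    exact this.congr (fun p hp => hηeq p.1 hp.1 p.2 hp.2)
  · exact reg.continuousOn.mono hsub

lemma eqOn_Icc_of_eqOn_Ioo {f g : ℝ → ℝ} (hf : ContinuousOn f (Icc 0 1))
    (hg : ContinuousOn g (Icc 0 1)) (h : EqOn f g (Ioo 0 1)) : EqOn f g (Icc 0 1) := by
  intro η hη
  have hcl : η ∈ closure (Ioo (0:ℝ) 1) := by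
    rw [closure_Ioo (zero_ne_one)]; exact hη
  have hne : (𝓝[Ioo (0:ℝ) 1] η).NeBot := mem_closure_iff_nhdsWithin_neBot.1 hcl
  have h1 : Tendsto f (𝓝[Ioo (0:ℝ) 1] η) (𝓝 (f η)) :=
    (hf η hη).mono_left (nhdsWithin_mono _ Ioo_subset_Icc_self)
  have h2 : Tendsto g (𝓝[Ioo (0:ℝ) 1] η) (𝓝 (g η)) :=
    (hg η hη).mono_left (nhdsWithin_mono _ Ioo_subset_Icc_self)
  have h3 : Tendsto f (𝓝[Ioo (0:ℝ) 1] η) (𝓝 (g η)) :=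
    h2.congr' (eventually_mem_nhdsWithin.mono (fun x hx => (h hx).symm))
  exact tendsto_nhds_unique h1 h3

lemma K_lip {K : ℝ → ℝ} (hsm : ContDiff ℝ 2 K) {C : ℝ} (hC : ∀ x : ℝ, |deriv K x| ≤ C) :
    ∀ x y : ℝ, |K x - K y| ≤ max C 0 * |x - y| := by
  intro x y
  have hdiff : Differentiable ℝ K := hsm.differentiable (by norm_num)
  have hlip : LipschitzWith (Real.toNNReal C) K := by
    apply lipschitzWith_of_nnnorm_deriv_le hdiff
    intro z
    have : ‖deriv K z‖ ≤ max C 0 := le_trans (hC z) (le_max_left _ _)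
    rw [← NNReal.coe_le_coe]
    simpa [Real.coe_toNNReal'] using this
  have := hlip.dist_le_mul x y
  rw [Real.dist_eq, Real.dist_eq, Real.coe_toNNReal'] at this
  exact this

lemma Icc_mem_nhdsWithin_Ici' {x τ : ℝ} (hx0 : 0 ≤ x) (hxτ : x < τ) :
    Icc 0 τ ∈ 𝓝[Ici x] x :=
  mem_of_superset (Icc_mem_nhdsGE_of_mem ⟨le_rfl, hxτ⟩) (Icc_subset_Icc hx0 le_rfl)

lemma Icc_mem_nhdsWithin_Ioi' {x τ : ℝ} (hx0 : 0 ≤ x) (hxτ : x < τ) :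
    Icc 0 τ ∈ 𝓝[Ioi x] x :=
  mem_of_superset (Icc_mem_nhdsGT_of_mem ⟨le_rfl, hxτ⟩) (Icc_subset_Icc hx0 le_rfl)

lemma sol_facts {K : ℝ → ℝ} {ΦF : ℝ} (hK : KAssump K ΦF) {T : ℝ≥0∞} {Qinit : ℝ → ℝ}
    {Q : ℝ → ℝ → ℝ} {N : ℝ → ℝ} (h : IsQSol K ΦF T Qinit Q N)
    {τ : ℝ} (hτ0 : 0 ≤ τ) (hτT : ENNReal.ofReal τ < T) :
    (∀ s ∈ Icc 0 τ, ∀ η ∈ Icc (0:ℝ) 1,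
        HasDerivWithinAt (fun t => Q t η) (pdTau Q s η) (Icc 0 τ) s) ∧
    (∀ s ∈ Icc 0 τ, ∀ η ∈ Icc (0:ℝ) 1,
        HasDerivWithinAt (fun x => Q s x) (pdEta Q s η) (Icc 0 1) η) ∧
    ContinuousOn (fun p : ℝ × ℝ => pdTau Q p.1 p.2) (Icc 0 τ ×ˢ Icc (0:ℝ) 1) ∧
    ContinuousOn (fun p : ℝ × ℝ => pdEta Q p.1 p.2) (Icc 0 τ ×ˢ Icc (0:ℝ) 1) ∧
    ContinuousOn (fun p : ℝ × ℝ => Q p.1 p.2) (Icc 0 τ ×ˢ Icc (0:ℝ) 1) ∧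
    (∀ s ∈ Icc 0 τ, Q s 0 = 0) ∧ (∀ s ∈ Icc 0 τ, Q s 1 = ΦF) ∧
    (∀ s ∈ Icc 0 τ, ∀ η ∈ Icc (0:ℝ) 1,
        pdTau Q s η = 1 / N s + K (Q s η) - pdEta Q s η) := by
  obtain ⟨hQt, hQη, hCt, hCη, hCQ⟩ := slice_facts h.reg hτT
  have hKc : Continuous K := hK.smooth.continuous
  -- PDE on the closed square
  have hpde : ∀ s ∈ Icc 0 τ, ∀ η ∈ Icc (0:ℝ) 1,
      pdTau Q s η = 1 / N s + K (Q s η) - pdEta Q s η := by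
    intro s hs
    have hsm : s ∈ Ico0 T := mem_Ico0 hτT hs
    have hslice : ∀ u : ℝ → ℝ → ℝ,
        ContinuousOn (fun p : ℝ × ℝ => u p.1 p.2) (Icc 0 τ ×ˢ Icc (0:ℝ) 1) →
        ContinuousOn (fun η => u s η) (Icc 0 1) := by
      intro u hu
      exact hu.comp ((continuous_const.prodMk continuous_id).continuousOn)
        (fun η hη => ⟨hs, hη⟩)
    have hf : ContinuousOn (fun η => pdTau Q s η) (Icc 0 1) := hslice _ hCt
    have hg : ContinuousOn (fun η => 1 / N s + K (Q s η) - pdEta Q s η) (Icc 0 1) :=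
      (continuousOn_const.add (hKc.comp_continuousOn (hslice _ hCQ))).sub (hslice _ hCη)
    have heq : EqOn (fun η => pdTau Q s η) (fun η => 1 / N s + K (Q s η) - pdEta Q s η)
        (Ioo 0 1) := by
      intro η hη
      have := h.pde s hsm η hη
      simp only
      linarith
    exact eqOn_Icc_of_eqOn_Ioo hf hg heq
  -- boundary value at η = 0
  have hb0 : ∀ s ∈ Icc 0 τ, Q s 0 = 0 := fun s hs => h.bc s (mem_Ico0 hτT hs)
  -- boundary value at η = 1 via Gronwall
  have hb1 : ∀ s ∈ Icc 0 τ, Q s 1 = ΦF := by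
    obtain ⟨C, hC⟩ := hK.bdd1
    have hlip := K_lip hK.smooth hC
    have h10 : (1:ℝ) ∈ Icc (0:ℝ) 1 := ⟨zero_le_one, le_rfl⟩
    have hcont : ContinuousOn (fun t => Q t 1 - ΦF) (Icc 0 τ) := by
      have : ContinuousOn (fun t => Q t 1) (Icc 0 τ) :=
        hCQ.comp ((continuous_id.prodMk continuous_const).continuousOn)
          (fun t ht => ⟨ht, h10⟩)
      exact this.sub continuousOn_const
    have hderiv : ∀ x ∈ Ico 0 τ, HasDerivWithinAt (fun t => Q t 1 - ΦF)
        (K (Q x 1) - K ΦF) (Ici x) x := by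
      intro x hx
      have hxI : x ∈ Icc 0 τ := ⟨hx.1, hx.2.le⟩
      have hd := (hQt x hxI 1 h10).sub_const ΦF
      have hval : pdTau Q x 1 = K (Q x 1) - K ΦF := by
        have h1 := hpde x hxI 1 h10
        have h2 := h.Ndef x (mem_Ico0 hτT hxI)
        rw [h1, h2]; ring
      rw [hval] at hd
      exact hd.mono_of_mem_nhdsWithin (Icc_mem_nhdsWithin_Ici' hx.1 hx.2)
    have hinit : Q 0 1 - ΦF = 0 := by
      rw [h.init 1 h10, h.init1]; ring
    have hbd : ∀ x ∈ Ico 0 τ, ‖K (Q x 1) - K ΦF‖ ≤ max C 0 * ‖Q x 1 - ΦF‖ + 0 := by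
      intro x hx
      rw [Real.norm_eq_abs, Real.norm_eq_abs, add_zero]
      exact hlip _ _
    have := norm_le_gronwallBound_of_norm_deriv_right_le (δ := 0) hcont hderiv
      (by simp [hinit]) hbd
    intro s hs
    have hle := this s hs
    rw [gronwallBound_ε0_δ0] at hle
    have : |Q s 1 - ΦF| ≤ 0 := by rwa [Real.norm_eq_abs] at hle
    have := abs_nonpos_iff.1 this
    linarith
  exact ⟨hQt, hQη, hCt, hCη, hCQ, hb0, hb1, hpde⟩

lemma sliceCont_left {u : ℝ → ℝ → ℝ} {A B : Set ℝ}
    (hu : ContinuousOn (fun p : ℝ × ℝ => u p.1 p.2) (A ×ˢ B)) {t : ℝ} (ht : t ∈ A) :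
    ContinuousOn (fun η => u t η) B :=
  hu.comp ((continuous_const.prodMk continuous_id).continuousOn) (fun η hη => ⟨ht, hη⟩)

lemma sliceCont_right {u : ℝ → ℝ → ℝ} {A B : Set ℝ}
    (hu : ContinuousOn (fun p : ℝ × ℝ => u p.1 p.2) (A ×ˢ B)) {η : ℝ} (hη : η ∈ B) :
    ContinuousOn (fun t => u t η) A :=
  hu.comp ((continuous_id.prodMk continuous_const).continuousOn) (fun t ht => ⟨ht, hη⟩)

lemma II_of_contOn {f : ℝ → ℝ} (hf : ContinuousOn f (Icc 0 1)) :
    IntervalIntegrable f MeasureTheory.volume 0 1 := by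
  apply ContinuousOn.intervalIntegrable
  rwa [uIcc_of_le zero_le_one]

lemma contOn_param {u : ℝ → ℝ → ℝ} {τ : ℝ}
    (hu : ContinuousOn (fun p : ℝ × ℝ => u p.1 p.2) (Icc 0 τ ×ˢ Icc (0:ℝ) 1)) :
    ContinuousOn (fun t => ∫ η in (0:ℝ)..1, u t η) (Icc 0 τ) := by
  obtain ⟨M, hM⟩ := (isCompact_Icc.prod isCompact_Icc).exists_bound_of_continuousOn hu
  intro s hs
  have hsub : Set.uIoc (0:ℝ) 1 ⊆ Icc 0 1 := by
    rw [uIoc_of_le zero_le_one]; exact Ioc_subset_Icc_self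
  apply intervalIntegral.continuousWithinAt_of_dominated_interval (bound := fun _ => M)
  · filter_upwards [self_mem_nhdsWithin] with t ht
    exact ((sliceCont_left hu ht).mono hsub).aestronglyMeasurable measurableSet_uIoc
  · filter_upwards [self_mem_nhdsWithin] with t ht
    exact Filter.Eventually.of_forall (fun η hη => hM (t, η) ⟨ht, hsub hη⟩)
  · exact intervalIntegrable_const
  · exact Filter.Eventually.of_forall (fun η hη => (sliceCont_right hu (hsub hη)) s hs)

lemma hasDerivWithinAt_primitive {f : ℝ → ℝ} {τ s : ℝ} (hf : ContinuousOn f (Icc 0 τ))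
    (hs : s ∈ Icc 0 τ) :
    HasDerivWithinAt (fun r => ∫ t in (0:ℝ)..r, f t) (f s) (Icc 0 τ) s := by
  haveI : Fact (s ∈ Icc (0:ℝ) τ) := ⟨hs⟩
  have hint : IntervalIntegrable f MeasureTheory.volume 0 s := by
    apply ContinuousOn.intervalIntegrable
    rw [uIcc_of_le hs.1]
    exact hf.mono (Icc_subset_Icc_right hs.2)
  exact intervalIntegral.integral_hasDerivWithinAt_right hint
    ⟨Icc 0 τ, self_mem_nhdsWithin, hf.aestronglyMeasurable measurableSet_Icc⟩
    (hf s hs)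

lemma primitive_repr {D u : ℝ → ℝ → ℝ} {τ : ℝ} (hτ0 : 0 ≤ τ)
    (hD : ContinuousOn (fun p : ℝ × ℝ => D p.1 p.2) (Icc 0 τ ×ˢ Icc (0:ℝ) 1))
    (hu : ContinuousOn (fun p : ℝ × ℝ => u p.1 p.2) (Icc 0 τ ×ˢ Icc (0:ℝ) 1))
    (hderiv : ∀ η ∈ Icc (0:ℝ) 1, ∀ t ∈ Icc 0 τ,
      HasDerivWithinAt (fun t => D t η) (u t η) (Icc 0 τ) t) :
    ∀ r ∈ Icc 0 τ, (∫ η in (0:ℝ)..1, D r η) =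
      (∫ η in (0:ℝ)..1, D 0 η) + ∫ t in (0:ℝ)..r, ∫ η in (0:ℝ)..1, u t η := by
  intro r hr
  have h0τ : (0:ℝ) ∈ Icc 0 τ := ⟨le_rfl, hτ0⟩
  have step1 : ∀ η ∈ Icc (0:ℝ) 1, (∫ t in (0:ℝ)..r, u t η) = D r η - D 0 η := by
    intro η hη
    apply intervalIntegral.integral_eq_sub_of_hasDeriv_right_of_le hr.1
    · exact (sliceCont_right hD hη).mono (Icc_subset_Icc_right hr.2)
    · intro x hx
      exact (hderiv η hη x ⟨hx.1.le, hx.2.le.trans hr.2⟩).mono_of_mem_nhdsWithin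
        (Icc_mem_nhdsWithin_Ioi' hx.1.le (lt_of_lt_of_le hx.2 hr.2))
    · apply ContinuousOn.intervalIntegrable
      rw [uIcc_of_le hr.1]
      exact (sliceCont_right hu hη).mono (Icc_subset_Icc_right hr.2)
  have step2 : (∫ η in (0:ℝ)..1, D r η) - (∫ η in (0:ℝ)..1, D 0 η)
      = ∫ η in (0:ℝ)..1, ∫ t in (0:ℝ)..r, u t η := by
    rw [← intervalIntegral.integral_sub (II_of_contOn (sliceCont_left hD hr))
      (II_of_contOn (sliceCont_left hD h0τ))]
    apply intervalIntegral.integral_congr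
    intro η hη
    rw [uIcc_of_le zero_le_one] at hη
    exact (step1 η hη).symm
  have step3 : (∫ η in (0:ℝ)..1, ∫ t in (0:ℝ)..r, u t η)
      = ∫ t in (0:ℝ)..r, ∫ η in (0:ℝ)..1, u t η := by
    simp_rw [intervalIntegral.integral_of_le hr.1,
      intervalIntegral.integral_of_le (zero_le_one : (0:ℝ) ≤ 1)]
    apply MeasureTheory.integral_integral_swap
    have hcont2 : ContinuousOn (fun p : ℝ × ℝ => u p.2 p.1) (Icc 0 1 ×ˢ Icc 0 r) :=
      hu.comp (continuous_swap.continuousOn)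
        (fun p hp => ⟨Icc_subset_Icc_right hr.2 hp.2, hp.1⟩)
    have hint : MeasureTheory.IntegrableOn (fun p : ℝ × ℝ => u p.2 p.1)
        (Ioc 0 1 ×ˢ Ioc 0 r) MeasureTheory.volume :=
      (hcont2.integrableOn_compact (isCompact_Icc.prod isCompact_Icc)).mono_set
        (prod_mono Ioc_subset_Icc_self Ioc_subset_Icc_self)
    have hmeq : ((MeasureTheory.volume.restrict (Ioc (0:ℝ) 1)).prod
        (MeasureTheory.volume.restrict (Ioc (0:ℝ) r)))
        = (MeasureTheory.volume : MeasureTheory.Measure (ℝ × ℝ)).restrict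
            ((Ioc (0:ℝ) 1) ×ˢ (Ioc (0:ℝ) r)) := by
      rw [MeasureTheory.Measure.prod_restrict, ← MeasureTheory.Measure.volume_eq_prod]
    rw [hmeq]
    exact hint
  linarith [step2, step3]

lemma integral_deriv_eta {f f' : ℝ → ℝ} (hf : ContinuousOn f (Icc 0 1))
    (hd : ∀ η ∈ Icc (0:ℝ) 1, HasDerivWithinAt f (f' η) (Icc 0 1) η)
    (hf' : ContinuousOn f' (Icc 0 1)) :
    ∫ η in (0:ℝ)..1, f' η = f 1 - f 0 := by
  apply intervalIntegral.integral_eq_sub_of_hasDeriv_right_of_le zero_le_one hf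
  · intro x hx
    exact (hd x (Ioo_subset_Icc_self hx)).mono_of_mem_nhdsWithin
      (Icc_mem_nhdsWithin_Ioi' hx.1.le hx.2)
  · exact II_of_contOn hf'

lemma integral_sq_expand {f : ℝ → ℝ} (hf : IntervalIntegrable f MeasureTheory.volume 0 1)
    (hf2 : IntervalIntegrable (fun η => (f η)^2) MeasureTheory.volume 0 1) (c : ℝ) :
    ∫ η in (0:ℝ)..1, (f η - c)^2
      = (∫ η in (0:ℝ)..1, (f η)^2) - 2*c*(∫ η in (0:ℝ)..1, f η) + c^2 := by
  have h1 : (fun η => (f η - c)^2) = fun η => ((f η)^2 - (2*c) * f η + c^2) := by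
    funext η; ring
  rw [show (∫ η in (0:ℝ)..1, (f η - c)^2)
      = ∫ η in (0:ℝ)..1, ((f η)^2 - (2*c) * f η + c^2) from by rw [h1]]
  rw [intervalIntegral.integral_add (hf2.sub (hf.const_mul (2*c))) intervalIntegrable_const,
      intervalIntegral.integral_sub hf2 (hf.const_mul (2*c)),
      intervalIntegral.integral_const_mul, intervalIntegral.integral_const]
  simp only [smul_eq_mul]
  ring

lemma integral_P0_mul {f g : ℝ → ℝ} (hf : ContinuousOn f (Icc 0 1))
    (hg : ContinuousOn g (Icc 0 1)) :
    ∫ η in (0:ℝ)..1, P0 f η * P0 g η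
      = (∫ η in (0:ℝ)..1, f η * g η) - (∫ η in (0:ℝ)..1, f η) * (∫ η in (0:ℝ)..1, g η) := by
  have hfI := II_of_contOn hf
  have hgI := II_of_contOn hg
  have hfgI : IntervalIntegrable (fun η => f η * g η) MeasureTheory.volume 0 1 :=
    II_of_contOn (hf.mul hg)
  have key : (fun η => P0 f η * P0 g η) = fun η =>
      (f η * g η - (∫ x in (0:ℝ)..1, g x) * f η - (∫ x in (0:ℝ)..1, f x) * g η
        + (∫ x in (0:ℝ)..1, f x) * (∫ x in (0:ℝ)..1, g x)) := by
    funext η; simp only [P0]; ring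
  rw [show (∫ η in (0:ℝ)..1, P0 f η * P0 g η) = ∫ η in (0:ℝ)..1,
      (f η * g η - (∫ x in (0:ℝ)..1, g x) * f η - (∫ x in (0:ℝ)..1, f x) * g η
        + (∫ x in (0:ℝ)..1, f x) * (∫ x in (0:ℝ)..1, g x)) from by rw [key]]
  rw [intervalIntegral.integral_add
        ((hfgI.sub (hfI.const_mul _)).sub (hgI.const_mul _)) intervalIntegrable_const,
      intervalIntegral.integral_sub (hfgI.sub (hfI.const_mul _)) (hgI.const_mul _),
      intervalIntegral.integral_sub hfgI (hfI.const_mul _),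
      intervalIntegral.integral_const_mul, intervalIntegral.integral_const_mul,
      intervalIntegral.integral_const]
  simp only [smul_eq_mul]
  ring

lemma P0_sub {f g : ℝ → ℝ} (hf : IntervalIntegrable f MeasureTheory.volume 0 1)
    (hg : IntervalIntegrable g MeasureTheory.volume 0 1) (η : ℝ) :
    P0 (fun x => f x - g x) η = P0 f η - P0 g η := by
  simp only [P0]
  rw [intervalIntegral.integral_sub hf hg]; ring

lemma P0_const_mul (k : ℝ) (f : ℝ → ℝ) (η : ℝ) :
    P0 (fun x => k * f x) η = k * P0 f η := by
  simp only [P0]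
  rw [intervalIntegral.integral_const_mul]; ring

end Stmt9Aux

/-- Theorem 4.5: the modified `L²` estimate via the projection `P₀`, with exact exponential
behaviour for affine `K`. -/
theorem stmt9 (ΦF : ℝ) (hΦF : 0 < ΦF) (K : ℝ → ℝ) (hK : KAssump K ΦF)
    (T₁ T₂ : ℝ≥0∞) (Qinit₁ Qinit₂ : ℝ → ℝ) (Q₁ Q₂ : ℝ → ℝ → ℝ) (N₁ N₂ : ℝ → ℝ)
    (h1 : IsQSol K ΦF T₁ Qinit₁ Q₁ N₁) (h2 : IsQSol K ΦF T₂ Qinit₂ Q₂ N₂)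
    (τ : ℝ) (hτ0 : 0 ≤ τ) (hτ1 : ENNReal.ofReal τ < T₁) (hτ2 : ENNReal.ofReal τ < T₂) :
    (∀ s ∈ Icc 0 τ,
      HasDerivWithinAt
        (fun r => ∫ η in (0 : ℝ)..1, (P0 (Q₁ r) η - P0 (Q₂ r) η) ^ 2)
        (2 * ∫ η in (0 : ℝ)..1,
          P0 (fun x => Q₁ s x - Q₂ s x) η * P0 (fun x => K (Q₁ s x) - K (Q₂ s x)) η)
        (Icc 0 τ) s) ∧
    (∀ k b : ℝ, (∀ φ : ℝ, K φ = k * φ + b) →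
      Real.sqrt (∫ η in (0 : ℝ)..1, (P0 (Q₁ τ) η - P0 (Q₂ τ) η) ^ 2)
        = Real.exp (k * τ) *
          Real.sqrt (∫ η in (0 : ℝ)..1, (P0 (Q₁ 0) η - P0 (Q₂ 0) η) ^ 2)) := by
  obtain ⟨hQt1, hQη1, hCt1, hCη1, hCQ1, hb01, hb11, hpde1⟩ := Stmt9Aux.sol_facts hK h1 hτ0 hτ1
  obtain ⟨hQt2, hQη2, hCt2, hCη2, hCQ2, hb02, hb12, hpde2⟩ := Stmt9Aux.sol_facts hK h2 hτ0 hτ2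
  have hKc : Continuous K := hK.smooth.continuous
  have h0I : (0:ℝ) ∈ Icc 0 τ := ⟨le_rfl, hτ0⟩
  have hDc : ContinuousOn (fun p : ℝ × ℝ => Q₁ p.1 p.2 - Q₂ p.1 p.2)
      (Icc 0 τ ×ˢ Icc (0:ℝ) 1) := hCQ1.sub hCQ2
  have hDtc : ContinuousOn (fun p : ℝ × ℝ => pdTau Q₁ p.1 p.2 - pdTau Q₂ p.1 p.2)
      (Icc 0 τ ×ˢ Icc (0:ℝ) 1) := hCt1.sub hCt2
  have hEc : ContinuousOn (fun p : ℝ × ℝ => pdEta Q₁ p.1 p.2 - pdEta Q₂ p.1 p.2)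
      (Icc 0 τ ×ˢ Icc (0:ℝ) 1) := hCη1.sub hCη2
  have hKDc : ContinuousOn (fun p : ℝ × ℝ => K (Q₁ p.1 p.2) - K (Q₂ p.1 p.2))
      (Icc 0 τ ×ˢ Icc (0:ℝ) 1) :=
    (hKc.comp_continuousOn hCQ1).sub (hKc.comp_continuousOn hCQ2)
  have hDd : ∀ η ∈ Icc (0:ℝ) 1, ∀ t ∈ Icc 0 τ,
      HasDerivWithinAt (fun t => Q₁ t η - Q₂ t η) (pdTau Q₁ t η - pdTau Q₂ t η) (Icc 0 τ) t :=
    fun η hη t ht => (hQt1 t ht η hη).sub (hQt2 t ht η hη)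
  have hD2d : ∀ η ∈ Icc (0:ℝ) 1, ∀ t ∈ Icc 0 τ,
      HasDerivWithinAt (fun t => (Q₁ t η - Q₂ t η)^2)
        (2 * (Q₁ t η - Q₂ t η) * (pdTau Q₁ t η - pdTau Q₂ t η)) (Icc 0 τ) t := by
    intro η hη t ht
    have h := (hDd η hη t ht).fun_pow 2
    refine h.congr_deriv ?_
    push_cast
    ring
  have hArep := Stmt9Aux.primitive_repr hτ0 (hDc.pow 2)
      ((continuousOn_const.mul hDc).mul hDtc) hD2d
  have hcrep := Stmt9Aux.primitive_repr hτ0 hDc hDtc hDd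
  have haC : ContinuousOn (fun t => ∫ η in (0:ℝ)..1,
      2 * (Q₁ t η - Q₂ t η) * (pdTau Q₁ t η - pdTau Q₂ t η)) (Icc 0 τ) :=
    Stmt9Aux.contOn_param ((continuousOn_const.mul hDc).mul hDtc)
  have hbC : ContinuousOn (fun t => ∫ η in (0:ℝ)..1,
      (pdTau Q₁ t η - pdTau Q₂ t η)) (Icc 0 τ) := Stmt9Aux.contOn_param hDtc
  have hpart1 : ∀ s ∈ Icc 0 τ,
      HasDerivWithinAt
        (fun r => ∫ η in (0 : ℝ)..1, (P0 (Q₁ r) η - P0 (Q₂ r) η) ^ 2)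
        (2 * ∫ η in (0 : ℝ)..1,
          P0 (fun x => Q₁ s x - Q₂ s x) η * P0 (fun x => K (Q₁ s x) - K (Q₂ s x)) η)
        (Icc 0 τ) s := by
    intro s hs
    have hD_s : ContinuousOn (fun η => Q₁ s η - Q₂ s η) (Icc 0 1) :=
      Stmt9Aux.sliceCont_left (u := fun t η => Q₁ t η - Q₂ t η) hDc hs
    have hDt_s : ContinuousOn (fun η => pdTau Q₁ s η - pdTau Q₂ s η) (Icc 0 1) :=
      Stmt9Aux.sliceCont_left (u := fun t η => pdTau Q₁ t η - pdTau Q₂ t η) hDtc hs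
    have hE_s : ContinuousOn (fun η => pdEta Q₁ s η - pdEta Q₂ s η) (Icc 0 1) :=
      Stmt9Aux.sliceCont_left (u := fun t η => pdEta Q₁ t η - pdEta Q₂ t η) hEc hs
    have hKD_s : ContinuousOn (fun η => K (Q₁ s η) - K (Q₂ s η)) (Icc 0 1) :=
      Stmt9Aux.sliceCont_left (u := fun t η => K (Q₁ t η) - K (Q₂ t η)) hKDc hs
    have hA : HasDerivWithinAt (fun r => ∫ t in (0:ℝ)..r, ∫ η in (0:ℝ)..1,
        2 * (Q₁ t η - Q₂ t η) * (pdTau Q₁ t η - pdTau Q₂ t η))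
        (∫ η in (0:ℝ)..1, 2 * (Q₁ s η - Q₂ s η) * (pdTau Q₁ s η - pdTau Q₂ s η))
        (Icc 0 τ) s := Stmt9Aux.hasDerivWithinAt_primitive haC hs
    have hB : HasDerivWithinAt (fun r => ∫ t in (0:ℝ)..r, ∫ η in (0:ℝ)..1,
        (pdTau Q₁ t η - pdTau Q₂ t η))
        (∫ η in (0:ℝ)..1, (pdTau Q₁ s η - pdTau Q₂ s η)) (Icc 0 τ) s :=
      Stmt9Aux.hasDerivWithinAt_primitive hbC hs
    have hG := (hA.const_add (∫ η in (0:ℝ)..1, (Q₁ 0 η - Q₂ 0 η)^2)).sub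
      ((hB.const_add (∫ η in (0:ℝ)..1, (Q₁ 0 η - Q₂ 0 η))).fun_pow 2)
    have hFG : ∀ r ∈ Icc 0 τ,
        (∫ η in (0 : ℝ)..1, (P0 (Q₁ r) η - P0 (Q₂ r) η) ^ 2)
          = ((∫ η in (0:ℝ)..1, (Q₁ 0 η - Q₂ 0 η)^2) + ∫ t in (0:ℝ)..r, ∫ η in (0:ℝ)..1,
              2 * (Q₁ t η - Q₂ t η) * (pdTau Q₁ t η - pdTau Q₂ t η))
            - ((∫ η in (0:ℝ)..1, (Q₁ 0 η - Q₂ 0 η)) + ∫ t in (0:ℝ)..r, ∫ η in (0:ℝ)..1,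
              (pdTau Q₁ t η - pdTau Q₂ t η))^2 := by
      intro r hr
      have hQ1I : IntervalIntegrable (Q₁ r) MeasureTheory.volume 0 1 :=
        Stmt9Aux.II_of_contOn (Stmt9Aux.sliceCont_left (u := Q₁) hCQ1 hr)
      have hQ2I : IntervalIntegrable (Q₂ r) MeasureTheory.volume 0 1 :=
        Stmt9Aux.II_of_contOn (Stmt9Aux.sliceCont_left (u := Q₂) hCQ2 hr)
      have hD_r : ContinuousOn (fun η => Q₁ r η - Q₂ r η) (Icc 0 1) :=
        Stmt9Aux.sliceCont_left (u := fun t η => Q₁ t η - Q₂ t η) hDc hr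
      have hptw : ∀ η : ℝ, P0 (Q₁ r) η - P0 (Q₂ r) η
          = (Q₁ r η - Q₂ r η) - (∫ x in (0:ℝ)..1, (Q₁ r x - Q₂ r x)) := by
        intro η
        simp only [P0]
        rw [intervalIntegral.integral_sub hQ1I hQ2I]
        ring
      have e1 : (∫ η in (0 : ℝ)..1, (P0 (Q₁ r) η - P0 (Q₂ r) η) ^ 2)
          = ∫ η in (0:ℝ)..1, ((Q₁ r η - Q₂ r η) - (∫ x in (0:ℝ)..1, (Q₁ r x - Q₂ r x)))^2 :=
        intervalIntegral.integral_congr (fun η _ => by rw [hptw η])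
      rw [e1, Stmt9Aux.integral_sq_expand (Stmt9Aux.II_of_contOn hD_r)
        (Stmt9Aux.II_of_contOn (hD_r.pow 2)) _]
      rw [← hArep r hr, ← hcrep r hr]
      ring
    have hDt_eq : ∀ η ∈ Icc (0:ℝ) 1, pdTau Q₁ s η - pdTau Q₂ s η
        = (1/N₁ s - 1/N₂ s) + (K (Q₁ s η) - K (Q₂ s η)) - (pdEta Q₁ s η - pdEta Q₂ s η) := by
      intro η hη
      rw [hpde1 s hs η hη, hpde2 s hs η hη]
      ring
    have hEint : (∫ η in (0:ℝ)..1, (pdEta Q₁ s η - pdEta Q₂ s η)) = 0 := by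
      have h := Stmt9Aux.integral_deriv_eta (f := fun η => Q₁ s η - Q₂ s η) hD_s
        (fun η hη => (hQη1 s hs η hη).sub (hQη2 s hs η hη)) hE_s
      rw [h]
      simp only [hb11 s hs, hb12 s hs, hb01 s hs, hb02 s hs]
      ring
    have hDEint : (∫ η in (0:ℝ)..1,
        2 * ((Q₁ s η - Q₂ s η) * (pdEta Q₁ s η - pdEta Q₂ s η))) = 0 := by
      have hder2 : ∀ η ∈ Icc (0:ℝ) 1, HasDerivWithinAt (fun η => (Q₁ s η - Q₂ s η)^2)
          (2 * ((Q₁ s η - Q₂ s η) * (pdEta Q₁ s η - pdEta Q₂ s η))) (Icc 0 1) η := by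
        intro η hη
        have h := ((hQη1 s hs η hη).fun_sub (hQη2 s hs η hη)).fun_pow 2
        refine h.congr_deriv ?_
        push_cast
        ring
      have h := Stmt9Aux.integral_deriv_eta (f := fun η => (Q₁ s η - Q₂ s η)^2) (hD_s.pow 2) hder2
        (continuousOn_const.mul (hD_s.mul hE_s))
      rw [h]
      simp only [hb11 s hs, hb12 s hs, hb01 s hs, hb02 s hs]
      ring
    have haS : (∫ η in (0:ℝ)..1, 2 * (Q₁ s η - Q₂ s η) * (pdTau Q₁ s η - pdTau Q₂ s η))
        = 2 * (1/N₁ s - 1/N₂ s) * (∫ η in (0:ℝ)..1, (Q₁ s η - Q₂ s η))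
          + 2 * (∫ η in (0:ℝ)..1, (Q₁ s η - Q₂ s η) * (K (Q₁ s η) - K (Q₂ s η))) := by
      have e2 : (∫ η in (0:ℝ)..1, 2 * (Q₁ s η - Q₂ s η) * (pdTau Q₁ s η - pdTau Q₂ s η))
          = ∫ η in (0:ℝ)..1, (2 * (1/N₁ s - 1/N₂ s) * (Q₁ s η - Q₂ s η)
              + 2 * ((Q₁ s η - Q₂ s η) * (K (Q₁ s η) - K (Q₂ s η)))
              - 2 * ((Q₁ s η - Q₂ s η) * (pdEta Q₁ s η - pdEta Q₂ s η))) := by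
        apply intervalIntegral.integral_congr
        intro η hη
        rw [uIcc_of_le zero_le_one] at hη
        simp only
        rw [hDt_eq η hη]
        ring
      have i1 : IntervalIntegrable (fun η => 2 * (1/N₁ s - 1/N₂ s) * (Q₁ s η - Q₂ s η))
          MeasureTheory.volume 0 1 := Stmt9Aux.II_of_contOn (continuousOn_const.mul hD_s)
      have i2 : IntervalIntegrable
          (fun η => 2 * ((Q₁ s η - Q₂ s η) * (K (Q₁ s η) - K (Q₂ s η))))
          MeasureTheory.volume 0 1 :=
        Stmt9Aux.II_of_contOn (continuousOn_const.mul (hD_s.mul hKD_s))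
      have i3 : IntervalIntegrable
          (fun η => 2 * ((Q₁ s η - Q₂ s η) * (pdEta Q₁ s η - pdEta Q₂ s η)))
          MeasureTheory.volume 0 1 :=
        Stmt9Aux.II_of_contOn (continuousOn_const.mul (hD_s.mul hE_s))
      rw [e2, intervalIntegral.integral_sub (i1.add i2) i3,
          intervalIntegral.integral_add i1 i2, hDEint,
          intervalIntegral.integral_const_mul, intervalIntegral.integral_const_mul]
      ring
    have hbS : (∫ η in (0:ℝ)..1, (pdTau Q₁ s η - pdTau Q₂ s η))
        = (1/N₁ s - 1/N₂ s) + (∫ η in (0:ℝ)..1, (K (Q₁ s η) - K (Q₂ s η))) := by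
      have e3 : (∫ η in (0:ℝ)..1, (pdTau Q₁ s η - pdTau Q₂ s η))
          = ∫ η in (0:ℝ)..1, ((1/N₁ s - 1/N₂ s) + (K (Q₁ s η) - K (Q₂ s η))
              - (pdEta Q₁ s η - pdEta Q₂ s η)) := by
        apply intervalIntegral.integral_congr
        intro η hη
        rw [uIcc_of_le zero_le_one] at hη
        exact hDt_eq η hη
      have i1 : IntervalIntegrable
          (fun η => (1/N₁ s - 1/N₂ s) + (K (Q₁ s η) - K (Q₂ s η)))
          MeasureTheory.volume 0 1 :=
        Stmt9Aux.II_of_contOn (continuousOn_const.add hKD_s)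
      rw [e3, intervalIntegral.integral_sub i1 (Stmt9Aux.II_of_contOn hE_s), hEint,
          intervalIntegral.integral_add intervalIntegrable_const
            (Stmt9Aux.II_of_contOn hKD_s),
          intervalIntegral.integral_const]
      simp only [sub_zero, smul_eq_mul]
      ring
    have hVal : (2 * ∫ η in (0:ℝ)..1, P0 (fun x => Q₁ s x - Q₂ s x) η
          * P0 (fun x => K (Q₁ s x) - K (Q₂ s x)) η)
        = (∫ η in (0:ℝ)..1, 2 * (Q₁ s η - Q₂ s η) * (pdTau Q₁ s η - pdTau Q₂ s η))
          - 2 * (((∫ η in (0:ℝ)..1, (Q₁ 0 η - Q₂ 0 η)) + ∫ t in (0:ℝ)..s, ∫ η in (0:ℝ)..1,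
              (pdTau Q₁ t η - pdTau Q₂ t η))
            * (∫ η in (0:ℝ)..1, (pdTau Q₁ s η - pdTau Q₂ s η))) := by
      rw [Stmt9Aux.integral_P0_mul hD_s hKD_s, ← hcrep s hs, haS, hbS]
      ring
    have hFinal := hG.congr hFG (hFG s hs)
    refine hFinal.congr_deriv ?_
    rw [hVal]
    push_cast
    ring
  refine ⟨hpart1, ?_⟩
  intro k b hkb
  have hder : ∀ s ∈ Icc 0 τ, HasDerivWithinAt
      (fun r => ∫ η in (0 : ℝ)..1, (P0 (Q₁ r) η - P0 (Q₂ r) η) ^ 2)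
      (2 * k * (∫ η in (0 : ℝ)..1, (P0 (Q₁ s) η - P0 (Q₂ s) η) ^ 2)) (Icc 0 τ) s := by
    intro s hs
    have h := hpart1 s hs
    have hQ1I : IntervalIntegrable (Q₁ s) MeasureTheory.volume 0 1 :=
      Stmt9Aux.II_of_contOn (Stmt9Aux.sliceCont_left (u := Q₁) hCQ1 hs)
    have hQ2I : IntervalIntegrable (Q₂ s) MeasureTheory.volume 0 1 :=
      Stmt9Aux.II_of_contOn (Stmt9Aux.sliceCont_left (u := Q₂) hCQ2 hs)
    have hfun : (fun x => K (Q₁ s x) - K (Q₂ s x)) = fun x => k * (Q₁ s x - Q₂ s x) := by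
      funext x; rw [hkb, hkb]; ring
    have e : ∀ η : ℝ, P0 (fun x => Q₁ s x - Q₂ s x) η
          * P0 (fun x => k * (Q₁ s x - Q₂ s x)) η
        = k * (P0 (Q₁ s) η - P0 (Q₂ s) η)^2 := by
      intro η
      simp only [P0]
      rw [intervalIntegral.integral_const_mul, intervalIntegral.integral_sub hQ1I hQ2I]
      ring
    have hval : (2 * ∫ η in (0:ℝ)..1, P0 (fun x => Q₁ s x - Q₂ s x) η
          * P0 (fun x => K (Q₁ s x) - K (Q₂ s x)) η)
        = 2 * k * (∫ η in (0 : ℝ)..1, (P0 (Q₁ s) η - P0 (Q₂ s) η) ^ 2) := by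
      rw [hfun]
      rw [intervalIntegral.integral_congr
          (g := fun η => k * (P0 (Q₁ s) η - P0 (Q₂ s) η)^2) (fun η _ => e η),
        intervalIntegral.integral_const_mul]
      ring
    rwa [hval] at h
  have hΦd : ∀ x ∈ Icc 0 τ, HasDerivWithinAt
      (fun r => Real.exp (-(2*k)*r) * ∫ η in (0:ℝ)..1, (P0 (Q₁ r) η - P0 (Q₂ r) η)^2)
      0 (Icc 0 τ) x := by
    intro x hx
    have h0 : HasDerivAt (fun r : ℝ => -(2*k)*r) (-(2*k)) x := by
      simpa using (hasDerivAt_id x).const_mul (-(2*k))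
    have hE : HasDerivAt (fun r => Real.exp (-(2*k)*r))
        (Real.exp (-(2*k)*x) * (-(2*k))) x := h0.exp
    have h := (hE.hasDerivWithinAt).fun_mul (hder x hx)
    refine h.congr_deriv ?_
    ring
  have hΦcont : ContinuousOn
      (fun r => Real.exp (-(2*k)*r) * ∫ η in (0:ℝ)..1, (P0 (Q₁ r) η - P0 (Q₂ r) η)^2)
      (Icc 0 τ) := fun x hx => (hΦd x hx).continuousWithinAt
  have hΦIci : ∀ x ∈ Ico 0 τ, HasDerivWithinAt
      (fun r => Real.exp (-(2*k)*r) * ∫ η in (0:ℝ)..1, (P0 (Q₁ r) η - P0 (Q₂ r) η)^2)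
      0 (Ici x) x := fun x hx =>
    (hΦd x ⟨hx.1, hx.2.le⟩).mono_of_mem_nhdsWithin (Stmt9Aux.Icc_mem_nhdsWithin_Ici' hx.1 hx.2)
  have hkey := constant_of_has_deriv_right_zero hΦcont hΦIci τ ⟨hτ0, le_rfl⟩
  simp only [mul_zero, Real.exp_zero, one_mul] at hkey
  have hF0 : 0 ≤ ∫ η in (0:ℝ)..1, (P0 (Q₁ 0) η - P0 (Q₂ 0) η)^2 :=
    intervalIntegral.integral_nonneg zero_le_one (fun η _ => sq_nonneg _)
  have hexp : Real.exp (k*τ)^2 * Real.exp (-(2*k)*τ) = 1 := by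
    rw [sq, ← Real.exp_add, ← Real.exp_add,
      show k*τ + k*τ + -(2*k)*τ = 0 by ring, Real.exp_zero]
  have hFτ : (∫ η in (0:ℝ)..1, (P0 (Q₁ τ) η - P0 (Q₂ τ) η)^2)
      = Real.exp (k*τ)^2 * (∫ η in (0:ℝ)..1, (P0 (Q₁ 0) η - P0 (Q₂ 0) η)^2) := by
    calc (∫ η in (0:ℝ)..1, (P0 (Q₁ τ) η - P0 (Q₂ τ) η)^2)
        = Real.exp (k*τ)^2 * (Real.exp (-(2*k)*τ)
            * ∫ η in (0:ℝ)..1, (P0 (Q₁ τ) η - P0 (Q₂ τ) η)^2) := by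
          rw [← mul_assoc, hexp, one_mul]
      _ = _ := by rw [hkey]
  rw [hFτ, Real.sqrt_mul (sq_nonneg _), Real.sqrt_sq (Real.exp_nonneg _)]
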